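/- Let φ(z) = (az+b)/(cz+d), ad − bc ≠ 0, be a selfmap of 𝔻 that is not the identity map, and suppose φ(0) = 0 and φ(η) = η for some η ∈ ℂ with |η| = 1 (and cη + d ≠ 0). Then there exists a real number s with 0 < s < 1 such that φ(z) = s·z/(1 − (1 − s)·conj(η)·z) for all z ∈ 𝔻. -/

import Mathlib

open ComplexConjugate

lemma aux_re_ge_abs (β : ℂ)
    (h : ∀ w : ℂ, ‖w‖ < 1 →
      ‖1 - β‖ * ‖w‖ < ‖1 - β * w‖) :
    ‖β‖ ≤ β.re := by
  by_cases hb : β = 0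
  · simp [hb]
  have hβpos : 0 < ‖β‖ := norm_pos_iff.mpr hb
  have key : ∀ r : ℝ, 0 ≤ r → r < 1 →
      0 < 1 - 2 * ‖β‖ * r - (1 - 2 * β.re) * r ^ 2 := by
    intro r hr0 hr1
    set w : ℂ := (r : ℂ) * conj β / (‖β‖ : ℂ) with hwdef
    have habsw : ‖w‖ = r := by
      simp [hwdef, norm_div, norm_mul, Complex.norm_conj, Complex.norm_real,
        abs_of_nonneg hr0, abs_of_nonneg (le_of_lt hβpos)]
      field_simp
    have hβw : β * w = ((r * ‖β‖ : ℝ) : ℂ) := by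
      have hc : ((‖β‖ : ℝ) : ℂ) ≠ 0 := by exact_mod_cast ne_of_gt hβpos
      rw [hwdef]
      rw [show β * ((r:ℂ) * conj β / (‖β‖ : ℂ)) = (r:ℂ) * (β * conj β) / (‖β‖ : ℂ) from by ring]
      rw [Complex.mul_conj, ← Complex.sq_norm]
      push_cast
      field_simp
    have h1 := h w (by rw [habsw]; exact hr1)
    rw [habsw, hβw] at h1
    have h2 : ‖1 - ((r * ‖β‖ : ℝ):ℂ)‖ = |1 - r * ‖β‖| := by
      rw [show (1 : ℂ) - ((r * ‖β‖ : ℝ):ℂ) = (((1 - r * ‖β‖ : ℝ)):ℂ) by push_cast; ring]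
      exact (Complex.norm_real _).trans (Real.norm_eq_abs _)
    rw [h2] at h1
    have h3 : (‖1 - β‖ * r) ^ 2 < (1 - r * ‖β‖) ^ 2 := by
      have h5 := mul_self_lt_mul_self (by positivity) h1
      nlinarith [h5, sq_abs (1 - r * ‖β‖)]
    have h4 : ‖1 - β‖ ^ 2 = 1 - 2 * β.re + ‖β‖ ^ 2 := by
      rw [Complex.sq_norm, Complex.sq_norm, Complex.normSq_apply, Complex.normSq_apply]
      simp [Complex.sub_re, Complex.sub_im]
      ring
    nlinarith [h3, h4]
  by_contra hlt
  push_neg at hlt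
  set A := ‖β‖ with hA
  set B := β.re with hB
  set δ := A - B with hδ
  have hδpos : 0 < δ := by simp [hδ]; linarith
  set M := 2 * A + 2 * |1 - 2 * B| + 1 with hM
  have hMpos : 0 < M := by positivity
  have hδM : δ < M := by
    have hBle : |B| ≤ A := by
      rw [hA, hB]; exact Complex.abs_re_le_norm β
    have := abs_nonneg (1 - 2*B)
    cases abs_cases B with
    | inl h' => simp [hδ, hM]; nlinarith
    | inr h' => simp [hδ, hM]; nlinarith
  have hr0 : 0 ≤ 1 - δ / M := by
    rw [sub_nonneg, div_le_one hMpos]; linarith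
  have hr1 : 1 - δ / M < 1 := by
    have : 0 < δ / M := div_pos hδpos hMpos
    linarith
  have hk := key _ hr0 hr1
  have habs1 : 1 - 2*B ≤ |1 - 2*B| := le_abs_self _
  have habs2 : -(|1 - 2*B|) ≤ 1 - 2*B := neg_abs_le _
  have ht : δ / M * M = δ := div_mul_cancel₀ δ (ne_of_gt hMpos)
  nlinarith [hk, mul_pos hδpos hMpos, sq_nonneg (δ/M), div_pos hδpos hMpos,
    mul_le_of_le_one_left (le_of_lt (div_pos hδpos hMpos)) (le_of_lt (by rw [div_lt_one hMpos]; exact hδM : δ/M < 1)),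
    hA ▸ norm_nonneg β]

/-- If `φ(z) = (az+b)/(cz+d)` is a linear-fractional selfmap of the unit disk, not the
identity map, fixing `0` and a point `η` on the unit circle, then there is a real `s`
with `0 < s < 1` such that `φ(z) = sz/(1 - (1-s)·conj(η)·z)` on the unit disk. -/
theorem normal_form_of_fixing_zero_and_boundary (a b c d η : ℂ)
    (hdet : a * d - b * c ≠ 0)
    (hself : ∀ z : ℂ, ‖z‖ < 1 →
      c * z + d ≠ 0 ∧ ‖(a * z + b) / (c * z + d)‖ < 1)
    (hnotid : ¬ ∀ z : ℂ, ‖z‖ < 1 → (a * z + b) / (c * z + d) = z)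
    (hfix0 : (a * 0 + b) / (c * 0 + d) = 0)
    (hη : ‖η‖ = 1) (hηden : c * η + d ≠ 0)
    (hfixη : (a * η + b) / (c * η + d) = η) :
    ∃ s : ℝ, 0 < s ∧ s < 1 ∧
      ∀ z : ℂ, ‖z‖ < 1 →
        (a * z + b) / (c * z + d) = (s : ℂ) * z / (1 - (1 - (s : ℂ)) * conj η * z) := by
  have hd : d ≠ 0 := by
    have := (hself 0 (by simp)).1
    simpa using this
  have hb0 : b = 0 := by
    simp only [mul_zero, zero_add] at hfix0
    exact (div_eq_zero_iff.mp hfix0).resolve_right hd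
  subst hb0
  have ha : a ≠ 0 := by
    intro h; apply hdet; rw [h]; ring
  have hη0 : η ≠ 0 := by
    intro h; rw [h] at hη; simp at hη
  have hηconj : η * conj η = 1 := by
    rw [Complex.mul_conj, ← Complex.sq_norm, hη]; norm_num
  have haeq : a = c * η + d := by
    rw [div_eq_iff hηden] at hfixη
    have h2 : (a - (c * η + d)) * η = 0 := by linear_combination hfixη
    rcases mul_eq_zero.mp h2 with h3 | h3
    · exact sub_eq_zero.mp h3
    · exact absurd h3 hη0
  have hc : c = (a - d) * conj η := by
    have h1 : c * η = a - d := by linear_combination -haeq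
    calc c = c * (η * conj η) := by rw [hηconj, mul_one]
    _ = (c * η) * conj η := by ring
    _ = (a - d) * conj η := by rw [h1]
  set β : ℂ := 1 - a / d with hβ
  have hdβ : d * β = d - a := by rw [hβ]; field_simp
  have hden : ∀ z : ℂ, c * z + d = d * (1 - β * (conj η * z)) := by
    intro z
    rw [hc]
    linear_combination (conj η * z) * hdβ
  have hkey : ∀ w : ℂ, ‖w‖ < 1 →
      ‖1 - β‖ * ‖w‖ < ‖1 - β * w‖ := by
    intro w hw
    have hzw : ‖η * w‖ = ‖w‖ := by
      rw [norm_mul, hη, one_mul]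
    have h1 := (hself (η * w) (by rw [hzw]; exact hw)).2
    rw [norm_div, div_lt_one (norm_pos_iff.mpr (hself (η * w) (by rw [hzw]; exact hw)).1)] at h1
    have h2 : c * (η * w) + d = d * (1 - β * w) := by
      rw [hden]
      congr 2
      rw [show conj η * (η * w) = (η * conj η) * w from by ring, hηconj, one_mul]
    rw [h2] at h1
    have h3 : a * (η * w) + 0 = (d * (1 - β)) * (η * w) := by
      have : d * (1 - β) = a := by rw [hβ]; field_simp; ring
      rw [this]; ring
    rw [h3] at h1
    simp only [norm_mul] at h1
    rw [hη, one_mul, mul_assoc] at h1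
    exact (mul_lt_mul_iff_right₀ (norm_pos_iff.mpr hd)).mp h1
  have haux := aux_re_ge_abs β hkey
  have him : β.im = 0 := by
    have h1 : |β.re| ≤ ‖β‖ := Complex.abs_re_le_norm β
    have h2 := Complex.sq_norm β
    rw [Complex.normSq_apply] at h2
    have heq : ‖β‖ = β.re := le_antisymm haux ((le_abs_self _).trans h1)
    rw [heq] at h2
    have h3 : β.im * β.im = 0 := by nlinarith
    exact mul_self_eq_zero.mp h3
  have h0le : 0 ≤ β.re := le_trans (norm_nonneg β) haux
  have hβeq : β = ((β.re : ℝ) : ℂ) := by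
    apply Complex.ext <;> simp [him]
  have hle1 : β.re ≤ 1 := by
    by_contra hgt
    push_neg at hgt
    set w : ℂ := ((β.re⁻¹ : ℝ) : ℂ) with hw
    have hz : ‖η * w‖ < 1 := by
      rw [norm_mul, hη, one_mul, hw, Complex.norm_real, Real.norm_eq_abs, abs_of_nonneg (by positivity)]
      exact inv_lt_one_of_one_lt₀ hgt
    have h1 := (hself (η * w) hz).1
    apply h1
    rw [hden, show conj η * (η * w) = (η * conj η) * w from by ring, hηconj, one_mul]
    rw [hβeq, hw]
    have hβre0 : β.re ≠ 0 := by positivity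
    have h5 : ((β.re : ℝ) : ℂ) * ((β.re⁻¹ : ℝ) : ℂ) = 1 := by
      push_cast
      exact div_self (Complex.ofReal_ne_zero.mpr hβre0)
    rw [h5]
    simp
  have hne1 : β.re ≠ 1 := by
    intro h1
    have hβ1 : β = 1 := by rw [hβeq, h1]; norm_num
    rw [hβ] at hβ1
    have h2 : a / d = 0 := by linear_combination -hβ1
    rcases div_eq_zero_iff.mp h2 with h3 | h3
    · exact ha h3
    · exact hd h3
  have hne0 : β.re ≠ 0 := by
    intro h0
    have hβ0 : β = 0 := by rw [hβeq, h0]; norm_num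
    apply hnotid
    intro z hz
    have had : a = d := by
      have h1 : a / d = 1 := by rw [hβ] at hβ0; linear_combination -hβ0
      field_simp at h1; exact h1
    have hc0 : c = 0 := by rw [hc, had]; ring
    rw [had, hc0]
    field_simp
    rw [mul_zero, zero_add, add_zero, mul_div_cancel_left₀ _ hd]
  have hlt1 : β.re < 1 := lt_of_le_of_ne hle1 hne1
  have h0lt : 0 < β.re := lt_of_le_of_ne h0le (Ne.symm hne0)
  refine ⟨1 - β.re, by linarith, by linarith, ?_⟩
  intro z hz
  have hscast : ((1 - β.re : ℝ) : ℂ) = 1 - β := by push_cast; rw [← hβeq]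
  rw [hscast]
  rw [show (1:ℂ) - (1 - (1 - β)) * conj η * z = 1 - β * (conj η * z) from by ring]
  rw [hden]
  have haa : a = d * (1 - β) := by rw [hβ]; field_simp; ring
  rw [haa]
  rw [show d * (1 - β) * z + 0 = d * ((1 - β) * z) from by ring]
  rw [mul_div_mul_left _ _ hd]
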